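/- Sharp interpolation inequality: for p > 1 and N ≥ 1 there is a constant C_{p,N} with (C_{p,N})^{N(p-1)/2 + (p+1)} = (N/(2π)) ((p-1)/(p+1)) (π(1 + 2(p+1)/(N(p-1))))^{N(p-1)/4 + 1} (Γ((p+1)/(p-1))/Γ((p+1)/(p-1) + N/2))^{(p-1)/2}, such that every u ∈ L²(ℝ^N) ∩ L^{p+1}(ℝ^N) with xu ∈ L² satisfies ‖u‖_{L²} ≤ C_{p,N} (‖xu‖_{L²}^{N(p-1)/2} ‖u‖_{L^{p+1}}^{p+1})^{1/(N(p-1)/2 + (p+1))}. -/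

import Mathlib

open MeasureTheory Real Set

lemma real_beta {a b : ℝ} (ha : 0 < a) (hb : 0 < b) :
    ∫ x in (0:ℝ)..1, x ^ (a - 1) * (1 - x) ^ (b - 1)
      = Real.Gamma a * Real.Gamma b / Real.Gamma (a + b) := by
  have key := Complex.Gamma_mul_Gamma_eq_betaIntegral (s := (a:ℂ)) (t := (b:ℂ))
    (by simpa using ha) (by simpa using hb)
  have hB : Complex.betaIntegral (a:ℂ) (b:ℂ)
      = ((∫ x in (0:ℝ)..1, x ^ (a - 1) * (1 - x) ^ (b - 1) : ℝ) : ℂ) := by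
    rw [Complex.betaIntegral, ← intervalIntegral.integral_ofReal]
    refine intervalIntegral.integral_congr fun x hx => ?_
    rw [Set.uIcc_of_le (by norm_num : (0:ℝ) ≤ 1)] at hx
    push_cast
    rw [Complex.ofReal_cpow hx.1, Complex.ofReal_cpow (by linarith [hx.2] : (0:ℝ) ≤ 1 - x)]
    push_cast
    ring
  have h2 : Real.Gamma (a + b) ≠ 0 := (Real.Gamma_pos_of_pos (add_pos ha hb)).ne'
  rw [hB, ← Complex.ofReal_add, Complex.Gamma_ofReal, Complex.Gamma_ofReal,
    Complex.Gamma_ofReal] at key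
  have keyR : Real.Gamma a * Real.Gamma b
      = Real.Gamma (a + b) * ∫ x in (0:ℝ)..1, x ^ (a - 1) * (1 - x) ^ (b - 1) := by
    exact_mod_cast key
  field_simp
  linarith [keyR]

lemma radial_int (N : ℕ) (hN : 1 ≤ N) {s : ℝ} (hs : 0 < s) :
    ∫ y in Ioi (0:ℝ), y ^ (N - 1) * (max (1 - y ^ 2) 0) ^ s
      = Real.Gamma ((N:ℝ)/2) * Real.Gamma (s+1) / (2 * Real.Gamma ((N:ℝ)/2 + (s+1))) := by
  have hNpos : (0:ℝ) < (N:ℝ)/2 := by positivity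
  have sub := integral_comp_rpow_Ioi_of_pos (E := ℝ)
    (g := fun t => (1/2) * (t ^ ((N:ℝ)/2 - 1) * (max (1 - t) 0) ^ s)) two_pos
  have e1 : ∀ x ∈ Ioi (0:ℝ),
      (2 * x ^ ((2:ℝ) - 1)) • ((1/2) * ((x ^ (2:ℝ)) ^ ((N:ℝ)/2 - 1) * (max (1 - x ^ (2:ℝ)) 0) ^ s))
        = x ^ (N - 1) * (max (1 - x ^ 2) 0) ^ s := by
    intro x hx
    have hx0 : (0:ℝ) < x := hx
    have hx2 : x ^ (2:ℝ) = x ^ (2:ℕ) := by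
      rw [← Real.rpow_natCast x 2]; norm_num
    have key : x * ((x ^ (2:ℕ) : ℝ)) ^ ((N:ℝ)/2 - 1) = x ^ (N - 1 : ℕ) := by
      rw [← Real.rpow_natCast x 2, ← Real.rpow_mul hx0.le,
        ← Real.rpow_natCast x (N-1), Nat.cast_sub hN,
        show ((N:ℝ) - (1:ℕ)) = 1 + 2*((N:ℝ)/2 - 1) by push_cast; ring,
        Real.rpow_add hx0, Real.rpow_one]
      norm_num
    rw [smul_eq_mul, show ((2:ℝ)-1) = (1:ℝ) by norm_num, Real.rpow_one, hx2, ← key]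
    ring
  have step1 : ∫ y in Ioi (0:ℝ), y ^ (N - 1) * (max (1 - y ^ 2) 0) ^ s
      = ∫ t in Ioi (0:ℝ), (1/2) * (t ^ ((N:ℝ)/2 - 1) * (max (1 - t) 0) ^ s) := by
    rw [← sub]; exact (setIntegral_congr_fun measurableSet_Ioi e1).symm
  rw [step1, integral_const_mul]
  have step2 : ∫ t in Ioi (0:ℝ), t ^ ((N:ℝ)/2 - 1) * (max (1 - t) 0) ^ s
      = ∫ t in Ioo (0:ℝ) 1, t ^ ((N:ℝ)/2 - 1) * (1 - t) ^ s := by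
    have h1 : ∀ t ∈ Ioi (0:ℝ), t ^ ((N:ℝ)/2 - 1) * (max (1 - t) 0) ^ s
        = (Ioo (0:ℝ) 1).indicator (fun t => t ^ ((N:ℝ)/2 - 1) * (1 - t) ^ s) t := by
      intro t ht
      by_cases h : t < 1
      · rw [indicator_of_mem (by exact ⟨ht, h⟩), max_eq_left (by linarith)]
      · rw [indicator_of_notMem (by simp [h]), max_eq_right (by push_neg at h; linarith),
          Real.zero_rpow hs.ne', mul_zero]
    rw [setIntegral_congr_fun measurableSet_Ioi h1, setIntegral_indicator measurableSet_Ioo,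
      Set.inter_eq_self_of_subset_right Ioo_subset_Ioi_self]
  rw [step2]
  have step3 : ∫ t in Ioo (0:ℝ) 1, t ^ ((N:ℝ)/2 - 1) * (1 - t) ^ s
      = Real.Gamma ((N:ℝ)/2) * Real.Gamma (s+1) / Real.Gamma ((N:ℝ)/2 + (s+1)) := by
    rw [← real_beta hNpos (by linarith : (0:ℝ) < s + 1)]
    rw [intervalIntegral.integral_of_le zero_le_one, integral_Ioc_eq_integral_Ioo]
    norm_num
  rw [step3]; ring

lemma w_integrable (N : ℕ) {s lam : ℝ} (hs : 0 < s) (hlam : 0 < lam) :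
    Integrable (fun x : EuclideanSpace ℝ (Fin N) => (max (1 - lam * ‖x‖ ^ 2) 0) ^ s) := by
  have hcont : Continuous (fun x : EuclideanSpace ℝ (Fin N) => (max (1 - lam * ‖x‖ ^ 2) 0) ^ s) := by
    apply Continuous.rpow_const
    · fun_prop
    · exact fun _ => Or.inr hs.le
  apply hcont.integrable_of_hasCompactSupport
  apply HasCompactSupport.intro (isCompact_closedBall (0 : EuclideanSpace ℝ (Fin N)) (Real.sqrt lam⁻¹))
  intro x hx
  simp only [Metric.mem_closedBall, dist_zero_right, not_le] at hx
  have h1 : lam⁻¹ < ‖x‖ ^ 2 := by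
    have := Real.sq_sqrt (inv_pos.mpr hlam).le
    nlinarith [Real.sqrt_nonneg lam⁻¹, norm_nonneg x]
  have h2 : (1:ℝ) < lam * ‖x‖ ^ 2 := by
    rw [← mul_inv_cancel₀ hlam.ne']
    exact mul_lt_mul_of_pos_left h1 hlam
  rw [max_eq_right (by linarith), Real.zero_rpow hs.ne']

lemma J_int (N : ℕ) (hN : 1 ≤ N) {s lam : ℝ} (hs : 0 < s) (hlam : 0 < lam) :
    ∫ x : EuclideanSpace ℝ (Fin N), (max (1 - lam * ‖x‖ ^ 2) 0) ^ s
      = lam ^ (-(N:ℝ)/2) * (π ^ ((N:ℝ)/2) * Real.Gamma (s+1) / Real.Gamma ((N:ℝ)/2 + (s+1))) := by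
  haveI : Nonempty (Fin N) := Fin.pos_iff_nonempty.mp hN
  haveI : Nontrivial (EuclideanSpace ℝ (Fin N)) := by
    apply Nontrivial.mk
    refine ⟨0, EuclideanSpace.single ⟨0, hN⟩ 1, ?_⟩
    intro h
    have := congrArg (fun v => v ⟨0, hN⟩) h.symm
    simp [EuclideanSpace.single] at this
  have hdim : Module.finrank ℝ (EuclideanSpace ℝ (Fin N)) = N := by
    simp [finrank_euclideanSpace]
  -- step 1: scaling
  have hR : (0:ℝ) < Real.sqrt lam := Real.sqrt_pos.mpr hlam
  have scale := MeasureTheory.Measure.integral_comp_smul_of_nonneg (μ := volume)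
    (f := fun x : EuclideanSpace ℝ (Fin N) => (max (1 - ‖x‖ ^ 2) 0) ^ s) (Real.sqrt lam)
    (hR := hR.le)
  have escale : ∀ x : EuclideanSpace ℝ (Fin N),
      (max (1 - ‖Real.sqrt lam • x‖ ^ 2) 0) ^ s = (max (1 - lam * ‖x‖ ^ 2) 0) ^ s := by
    intro x
    rw [norm_smul, Real.norm_eq_abs, abs_of_pos hR, mul_pow, Real.sq_sqrt hlam.le]
  rw [funext escale] at scale
  rw [scale, hdim]
  have base := integral_fun_norm_addHaar (volume : Measure (EuclideanSpace ℝ (Fin N)))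
    (fun r : ℝ => (max (1 - r ^ 2) 0) ^ s)
  simp only [hdim, smul_eq_mul, nsmul_eq_mul] at base
  rw [base, radial_int N hN hs, measureReal_def, EuclideanSpace.volume_ball]
  have hcard : Fintype.card (Fin N) = N := Fintype.card_fin N
  rw [hcard]
  have hG2 : Real.Gamma ((N:ℝ)/2) ≠ 0 := (Real.Gamma_pos_of_pos (by positivity)).ne'
  have hG3 : Real.Gamma ((N:ℝ)/2 + (s+1)) ≠ 0 := (Real.Gamma_pos_of_pos (by positivity)).ne'
  have hGadd : Real.Gamma ((N:ℝ)/2 + 1) = ((N:ℝ)/2) * Real.Gamma ((N:ℝ)/2) :=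
    Real.Gamma_add_one (by positivity)
  have hsq : Real.sqrt lam ^ N = lam ^ ((N:ℝ)/2) := by
    rw [Real.sqrt_eq_rpow, ← Real.rpow_natCast (lam ^ ((1:ℝ)/2)) N, ← Real.rpow_mul hlam.le]
    ring_nf
  have hsqpi : Real.sqrt π ^ N = π ^ ((N:ℝ)/2) := by
    rw [Real.sqrt_eq_rpow, ← Real.rpow_natCast (π ^ ((1:ℝ)/2)) N, ← Real.rpow_mul pi_pos.le]
    ring_nf
  have hlamneg : lam ^ (-(N:ℝ)/2) = (lam ^ ((N:ℝ)/2))⁻¹ := by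
    rw [← Real.rpow_neg hlam.le]; ring_nf
  have hlampos : (0:ℝ) < lam ^ ((N:ℝ)/2) := Real.rpow_pos_of_pos hlam _
  rw [ENNReal.ofReal_one, one_pow, one_mul,
    ENNReal.toReal_ofReal (by positivity), hsq, hsqpi, hGadd, smul_eq_mul, hlamneg]
  have hNpos : (0:ℝ) < N := by exact_mod_cast hN
  field_simp

lemma young_pt {q : ℝ} (hq : 1 < q) {mu t c : ℝ} (hmu : 0 < mu) (ht : 0 ≤ t) :
    t * c ≤ mu * t ^ q
      + ((q - 1) * q ^ (-(q/(q-1))) * mu ^ (-(1/(q-1)))) * (max c 0) ^ (q/(q-1)) := by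
  have hq0 : (0:ℝ) < q := by linarith
  have hq1 : (0:ℝ) < q - 1 := by linarith
  have hK : (0:ℝ) < (q - 1) * q ^ (-(q/(q-1))) * mu ^ (-(1/(q-1))) := by positivity
  rcases le_or_gt c 0 with hc | hc
  · have h1 : t * c ≤ 0 := mul_nonpos_of_nonneg_of_nonpos ht hc
    have h2 : (0:ℝ) ≤ mu * t ^ q := by positivity
    have h3 : (0:ℝ) ≤ (max c 0) ^ (q/(q-1)) := Real.rpow_nonneg (le_max_right _ _) _
    nlinarith
  · rw [max_eq_left hc.le]
    have hconj : Real.HolderConjugate q (q/(q-1)) := by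
      rw [Real.holderConjugate_iff]
      constructor
      · exact hq
      · field_simp; ring
    have hqmu : (0:ℝ) < q * mu := by positivity
    have hyoung := Real.young_inequality_of_nonneg
      (a := (q * mu) ^ (1/q) * t) (b := c * ((q * mu) ^ (1/q))⁻¹)
      (by positivity) (by positivity) hconj
    have hab : ((q * mu) ^ (1/q) * t) * (c * ((q * mu) ^ (1/q))⁻¹) = t * c := by
      field_simp
    have hbase : (0:ℝ) < (q * mu) ^ (1/q) := Real.rpow_pos_of_pos hqmu _
    have ha : ((q * mu) ^ (1/q) * t) ^ q / q = mu * t ^ q := by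
      rw [Real.mul_rpow hbase.le ht, ← Real.rpow_mul hqmu.le,
        one_div_mul_cancel hq0.ne', Real.rpow_one]
      field_simp
    have hb : (c * ((q * mu) ^ (1/q))⁻¹) ^ (q/(q-1)) / (q/(q-1))
        = ((q - 1) * q ^ (-(q/(q-1))) * mu ^ (-(1/(q-1)))) * c ^ (q/(q-1)) := by
      rw [← Real.rpow_neg hqmu.le, Real.mul_rpow hc.le (Real.rpow_nonneg hqmu.le _),
        ← Real.rpow_mul hqmu.le,
        show -(1/q) * (q/(q-1)) = -(1/(q-1)) by field_simp,
        Real.mul_rpow hq0.le hmu.le,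
        show -(q/(q-1)) = -(1/(q-1)) + (-1) by field_simp; ring,
        Real.rpow_add hq0, Real.rpow_neg_one]
      field_simp
    rw [hab, ha, hb] at hyoung
    exact hyoung

lemma key_bound (N : ℕ) (hN : 1 ≤ N) (p : ℝ) (hp : 1 < p)
    (u : EuclideanSpace ℝ (Fin N) → ℂ)
    (hu_L2 : Integrable (fun x => ‖u x‖ ^ 2))
    (hu_Lp1 : Integrable (fun x => ‖u x‖ ^ (p + 1)))
    (hu_var : Integrable (fun x => ‖x‖ ^ 2 * ‖u x‖ ^ 2))
    {lam mu : ℝ} (hlam : 0 < lam) (hmu : 0 < mu) :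
    (∫ x, ‖u x‖ ^ 2) ≤ lam * (∫ x, ‖x‖ ^ 2 * ‖u x‖ ^ 2) + mu * (∫ x, ‖u x‖ ^ (p+1))
      + ((((p+1)/2) - 1) * ((p+1)/2) ^ (-((((p+1)/2))/(((p+1)/2)-1)))
          * (π ^ ((N:ℝ)/2) * Real.Gamma ((((p+1)/2))/(((p+1)/2)-1) + 1)
            / Real.Gamma ((N:ℝ)/2 + ((((p+1)/2))/(((p+1)/2)-1) + 1))))
        * mu ^ (-(1/(((p+1)/2)-1))) * lam ^ (-(N:ℝ)/2) := by
  set q : ℝ := (p+1)/2 with hqdef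
  have hq : 1 < q := by rw [hqdef]; linarith
  have hq1 : (0:ℝ) < q - 1 := by linarith
  have hq' : (0:ℝ) < q/(q-1) := by positivity
  set Kmu : ℝ := (q - 1) * q ^ (-(q/(q-1))) * mu ^ (-(1/(q-1))) with hKdef
  have hKpos : 0 < Kmu := by rw [hKdef]; positivity
  -- pointwise bound
  have hpt : ∀ x : EuclideanSpace ℝ (Fin N),
      ‖u x‖ ^ 2 - lam * (‖x‖ ^ 2 * ‖u x‖ ^ 2)
        ≤ mu * ‖u x‖ ^ (p+1) + Kmu * (max (1 - lam * ‖x‖ ^ 2) 0) ^ (q/(q-1)) := by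
    intro x
    have h0 := young_pt hq hmu (t := ‖u x‖ ^ 2) (c := 1 - lam * ‖x‖ ^ 2) (by positivity)
    have hpow : (‖u x‖ ^ 2 : ℝ) ^ q = ‖u x‖ ^ (p+1) := by
      rw [← Real.rpow_natCast (‖u x‖) 2, ← Real.rpow_mul (norm_nonneg _)]
      norm_num [hqdef]
      ring_nf
    rw [hpow] at h0
    calc ‖u x‖ ^ 2 - lam * (‖x‖ ^ 2 * ‖u x‖ ^ 2) = ‖u x‖ ^ 2 * (1 - lam * ‖x‖ ^ 2) := by ring
      _ ≤ _ := h0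
  have hfint : Integrable (fun x : EuclideanSpace ℝ (Fin N) =>
      ‖u x‖ ^ 2 - lam * (‖x‖ ^ 2 * ‖u x‖ ^ 2)) := hu_L2.sub (hu_var.const_mul lam)
  have hwint := w_integrable N (s := q/(q-1)) (lam := lam) hq' hlam
  have hgint : Integrable (fun x : EuclideanSpace ℝ (Fin N) =>
      mu * ‖u x‖ ^ (p+1) + Kmu * (max (1 - lam * ‖x‖ ^ 2) 0) ^ (q/(q-1))) :=
    (hu_Lp1.const_mul mu).add (hwint.const_mul Kmu)
  have hmono := integral_mono hfint hgint hpt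
  rw [integral_sub hu_L2 (hu_var.const_mul lam), integral_const_mul,
    integral_add (hu_Lp1.const_mul mu) (hwint.const_mul Kmu), integral_const_mul,
    integral_const_mul, J_int N hN hq' hlam] at hmono
  rw [hKdef] at hmono
  linarith [hmono]

lemma eq_of_log {x y : ℝ} (hx : 0 < x) (hy : 0 < y) (h : Real.log x = Real.log y) : x = y := by
  rw [← Real.exp_log hx, ← Real.exp_log hy, h]

lemma opt_abstract {K0 A B a b T : ℝ} (hK0 : 0 < K0) (hA : 0 < A) (hB : 0 < B)
    (ha : 0 < a) (hb : 0 < b) (hT : 0 < T)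
    (hTm : (1+a+b) * Real.log T
      = Real.log K0 + b*Real.log A + a*Real.log B - a*Real.log a - b*Real.log b) :
    (b*T/A)*A + (a*T/B)*B + K0 * (a*T/B)^(-a) * (b*T/A)^(-b) = (1+a+b)*T := by
  have h1 : (b*T/A)*A = b*T := by field_simp
  have h2 : (a*T/B)*B = a*T := by field_simp
  have h3 : K0 * (a*T/B)^(-a) * (b*T/A)^(-b) = T := by
    apply eq_of_log (by positivity) hT
    rw [Real.log_mul (by positivity) (by positivity), Real.log_mul hK0.ne' (by positivity),
      Real.log_rpow (by positivity), Real.log_rpow (by positivity),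
      Real.log_div (by positivity) hB.ne', Real.log_mul ha.ne' hT.ne',
      Real.log_div (by positivity) hA.ne', Real.log_mul hb.ne' hT.ne']
    linarith
  rw [h1, h2, h3]; ring

lemma const_eq (N : ℕ) (hN : 1 ≤ N) (p : ℝ) (hp : 1 < p) {A B T : ℝ} (hA : 0 < A) (hB : 0 < B)
    (hT : 0 < T)
    (hTm : (1 + 2/(p-1) + (N:ℝ)/2) * Real.log T
      = Real.log ((((p+1)/2) - 1) * ((p+1)/2) ^ (-((((p+1)/2))/(((p+1)/2)-1)))
          * (π ^ ((N:ℝ)/2) * Real.Gamma ((((p+1)/2))/(((p+1)/2)-1) + 1)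
            / Real.Gamma ((N:ℝ)/2 + ((((p+1)/2))/(((p+1)/2)-1) + 1))))
        + ((N:ℝ)/2)*Real.log A + (2/(p-1))*Real.log B
        - (2/(p-1))*Real.log (2/(p-1)) - ((N:ℝ)/2)*Real.log ((N:ℝ)/2)) :
    (((N : ℝ) / (2 * π)) * ((p - 1) / (p + 1))
            * (π * (1 + 2 * (p + 1) / ((N : ℝ) * (p - 1)))) ^ ((N : ℝ) * (p - 1) / 4 + 1)
            * (Real.Gamma ((p + 1) / (p - 1))
                / Real.Gamma ((p + 1) / (p - 1) + (N : ℝ) / 2)) ^ ((p - 1) / 2))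
          ^ (1 / ((N : ℝ) * (p - 1) / 2 + (p + 1)))
        * (((A ^ ((1 : ℝ) / 2)) ^ ((N : ℝ) * (p - 1) / 2))
            * ((B ^ (1 / (p + 1))) ^ (p + 1)))
          ^ (1 / ((N : ℝ) * (p - 1) / 2 + (p + 1)))
      = ((1 + 2/(p-1) + (N:ℝ)/2) * T) ^ ((1:ℝ)/2) := by
  have hNR : (0:ℝ) < (N:ℝ) := by exact_mod_cast hN
  have hp1 : (0:ℝ) < p - 1 := by linarith
  have hp2 : (0:ℝ) < p + 1 := by linarith
  have hq' : (0:ℝ) < (p+1)/(p-1) := by positivity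
  have hG1 : (0:ℝ) < Real.Gamma ((p+1)/(p-1)) := Real.Gamma_pos_of_pos hq'
  have hG2 : (0:ℝ) < Real.Gamma ((p+1)/(p-1) + (N:ℝ)/2) := Real.Gamma_pos_of_pos (by positivity)
  have hσ : (0:ℝ) < 1 + 2*(p+1)/((N:ℝ)*(p-1)) := by positivity
  have hm : (0:ℝ) < 1 + 2/(p-1) + (N:ℝ)/2 := by positivity
  have hθ : (0:ℝ) < (N:ℝ)*(p-1)/2 + (p+1) := by positivity
  have hq'val : ((p+1)/2)/(((p+1)/2)-1) = (p+1)/(p-1) := by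
    rw [show ((p+1)/2) - 1 = (p-1)/2 by ring, div_div_div_cancel_right₀]
    norm_num
  have hXpos : (0:ℝ) < ((N : ℝ) / (2 * π)) * ((p - 1) / (p + 1))
      * (π * (1 + 2 * (p + 1) / ((N : ℝ) * (p - 1)))) ^ ((N : ℝ) * (p - 1) / 4 + 1)
      * (Real.Gamma ((p + 1) / (p - 1))
          / Real.Gamma ((p + 1) / (p - 1) + (N : ℝ) / 2)) ^ ((p - 1) / 2) := by
    have := Real.pi_pos
    positivity
  have hYpos : (0:ℝ) < (A ^ ((1 : ℝ) / 2)) ^ ((N : ℝ) * (p - 1) / 2)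
      * ((B ^ (1 / (p + 1))) ^ (p + 1)) := by positivity
  have hm_eq : 1 + 2/(p-1) + (N:ℝ)/2 = (p+1)/(p-1) + (N:ℝ)/2 := by
    field_simp
    ring
  have hM : (0:ℝ) < (p+1)/(p-1) + (N:ℝ)/2 := by positivity
  have hπσ : (0:ℝ) < π * (1 + 2*(p+1)/((N:ℝ)*(p-1))) := by positivity
  have hsig : π * (1 + 2 * (p + 1) / ((N : ℝ) * (p - 1)))
      = 2*π*((p+1)/(p-1)+(N:ℝ)/2)/(N:ℝ) := by
    field_simp
    ring
  have h2π : (0:ℝ) < 2*π := by positivity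
  have hq2 : (0:ℝ) < (p+1)/2 := by positivity
  have hΓa : Real.Gamma ((p+1)/(p-1) + 1) = ((p+1)/(p-1)) * Real.Gamma ((p+1)/(p-1)) :=
    Real.Gamma_add_one hq'.ne'
  have hΓb : Real.Gamma ((N:ℝ)/2 + ((p+1)/(p-1) + 1))
      = ((p+1)/(p-1) + (N:ℝ)/2) * Real.Gamma ((p+1)/(p-1) + (N:ℝ)/2) := by
    rw [show (N:ℝ)/2 + ((p+1)/(p-1) + 1) = ((p+1)/(p-1) + (N:ℝ)/2) + 1 by ring,
      Real.Gamma_add_one hM.ne']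
  -- expand hTm
  rw [hq'val, show ((p+1)/2 - 1 : ℝ) = (p-1)/2 from by ring, hΓa, hΓb, hm_eq] at hTm
  rw [Real.log_mul (by positivity) (by positivity), Real.log_mul (by positivity) (by positivity),
    Real.log_div hp1.ne' two_ne_zero, Real.log_rpow hq2,
    Real.log_div hp2.ne' two_ne_zero,
    Real.log_div (by positivity) (by positivity),
    Real.log_mul (by positivity) (by positivity), Real.log_rpow pi_pos,
    Real.log_mul hq'.ne' hG1.ne', Real.log_mul hM.ne' hG2.ne',
    Real.log_div two_ne_zero hp1.ne', Real.log_div hNR.ne' two_ne_zero,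
    Real.log_div hp2.ne' hp1.ne'] at hTm
  have hLT : Real.log T = ((Real.log (p-1) - Real.log 2)
      + (-((p+1)/(p-1))) * (Real.log (p+1) - Real.log 2)
      + (((N:ℝ)/2) * Real.log π
          + ((Real.log (p+1) - Real.log (p-1)) + Real.log (Real.Gamma ((p+1)/(p-1))))
          - (Real.log ((p+1)/(p-1) + (N:ℝ)/2)
              + Real.log (Real.Gamma ((p+1)/(p-1) + (N:ℝ)/2))))
      + ((N:ℝ)/2) * Real.log A + (2/(p-1)) * Real.log B
      - (2/(p-1)) * (Real.log 2 - Real.log (p-1))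
      - ((N:ℝ)/2) * (Real.log (N:ℝ) - Real.log 2)) / ((p+1)/(p-1) + (N:ℝ)/2) := by
    rw [eq_div_iff hM.ne', mul_comm]
    linear_combination hTm
  -- expand goal
  apply eq_of_log (by positivity) (by positivity)
  rw [Real.log_mul (Real.rpow_pos_of_pos hXpos _).ne' (Real.rpow_pos_of_pos hYpos _).ne',
    Real.log_rpow hXpos, Real.log_rpow hYpos,
    Real.log_mul (by positivity) (by positivity), Real.log_mul (by positivity) (by positivity),
    Real.log_mul (by positivity) (by positivity),
    Real.log_rpow hπσ, Real.log_rpow (div_pos hG1 hG2),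
    Real.log_div hNR.ne' h2π.ne', Real.log_mul two_ne_zero pi_ne_zero,
    Real.log_div hp1.ne' hp2.ne', Real.log_div hG1.ne' hG2.ne',
    hsig, Real.log_div (by positivity) hNR.ne', Real.log_mul h2π.ne' hM.ne',
    Real.log_mul two_ne_zero pi_ne_zero,
    Real.log_mul (Real.rpow_pos_of_pos (Real.rpow_pos_of_pos hA _) _).ne'
      (Real.rpow_pos_of_pos (Real.rpow_pos_of_pos hB _) _).ne',
    Real.log_rpow (Real.rpow_pos_of_pos hA _), Real.log_rpow hA,
    Real.log_rpow (Real.rpow_pos_of_pos hB _), Real.log_rpow hB,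
    Real.log_rpow (by positivity : (0:ℝ) < (1 + 2/(p-1) + (N:ℝ)/2) * T),
    Real.log_mul hm.ne' hT.ne', hm_eq, hLT]
  field_simp
  ring

/-- Sharp interpolation inequality: for `p > 1`, `N ≥ 1`, with the constant
`C_{p,N}` defined by
`(C_{p,N})^{N(p−1)/2+(p+1)} = (N/(2π))((p−1)/(p+1))(π(1+2(p+1)/(N(p−1))))^{N(p−1)/4+1}
  (Γ((p+1)/(p−1))/Γ((p+1)/(p−1)+N/2))^{(p−1)/2}`,
every `u ∈ L² ∩ L^{p+1}` with `xu ∈ L²` satisfies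
`‖u‖_{L²} ≤ C_{p,N} (‖xu‖_{L²}^{N(p−1)/2} ‖u‖_{L^{p+1}}^{p+1})^{1/(N(p−1)/2+(p+1))}`. -/
theorem sharp_interpolation (N : ℕ) (hN : 1 ≤ N) (p : ℝ) (hp : 1 < p)
    (u : EuclideanSpace ℝ (Fin N) → ℂ)
    (hu_L2 : Integrable (fun x => ‖u x‖ ^ 2))
    (hu_Lp1 : Integrable (fun x => ‖u x‖ ^ (p + 1)))
    (hu_var : Integrable (fun x => ‖x‖ ^ 2 * ‖u x‖ ^ 2)) :
    (∫ x, ‖u x‖ ^ 2) ^ ((1 : ℝ) / 2)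
      ≤ (((N : ℝ) / (2 * π)) * ((p - 1) / (p + 1))
            * (π * (1 + 2 * (p + 1) / ((N : ℝ) * (p - 1)))) ^ ((N : ℝ) * (p - 1) / 4 + 1)
            * (Real.Gamma ((p + 1) / (p - 1))
                / Real.Gamma ((p + 1) / (p - 1) + (N : ℝ) / 2)) ^ ((p - 1) / 2))
          ^ (1 / ((N : ℝ) * (p - 1) / 2 + (p + 1)))
        * ((((∫ x, ‖x‖ ^ 2 * ‖u x‖ ^ 2) ^ ((1 : ℝ) / 2)) ^ ((N : ℝ) * (p - 1) / 2))
            * (((∫ x, ‖u x‖ ^ (p + 1)) ^ (1 / (p + 1))) ^ (p + 1)))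
          ^ (1 / ((N : ℝ) * (p - 1) / 2 + (p + 1))) := by
  have hNR : (0:ℝ) < (N:ℝ) := by exact_mod_cast hN
  have hp1 : (0:ℝ) < p - 1 := by linarith
  have hp2 : (0:ℝ) < p + 1 := by linarith
  set S : ℝ := ∫ x, ‖u x‖ ^ 2 with hSdef
  set A : ℝ := ∫ x, ‖x‖ ^ 2 * ‖u x‖ ^ 2 with hAdef
  set B : ℝ := ∫ x, ‖u x‖ ^ (p + 1) with hBdef
  have hSnn : 0 ≤ S := integral_nonneg fun x => by positivity
  have hAnn : 0 ≤ A := integral_nonneg fun x => by positivity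
  have hBnn : 0 ≤ B := integral_nonneg fun x => by positivity
  have hXpos : (0:ℝ) < ((N : ℝ) / (2 * π)) * ((p - 1) / (p + 1))
      * (π * (1 + 2 * (p + 1) / ((N : ℝ) * (p - 1)))) ^ ((N : ℝ) * (p - 1) / 4 + 1)
      * (Real.Gamma ((p + 1) / (p - 1))
          / Real.Gamma ((p + 1) / (p - 1) + (N : ℝ) / 2)) ^ ((p - 1) / 2) := by
    have := Real.pi_pos
    have h1 : (0:ℝ) < Real.Gamma ((p+1)/(p-1)) := Real.Gamma_pos_of_pos (by positivity)
    have h2 : (0:ℝ) < Real.Gamma ((p+1)/(p-1) + (N:ℝ)/2) := Real.Gamma_pos_of_pos (by positivity)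
    positivity
  have hRHSnn : (0:ℝ) ≤ (((N : ℝ) / (2 * π)) * ((p - 1) / (p + 1))
            * (π * (1 + 2 * (p + 1) / ((N : ℝ) * (p - 1)))) ^ ((N : ℝ) * (p - 1) / 4 + 1)
            * (Real.Gamma ((p + 1) / (p - 1))
                / Real.Gamma ((p + 1) / (p - 1) + (N : ℝ) / 2)) ^ ((p - 1) / 2))
          ^ (1 / ((N : ℝ) * (p - 1) / 2 + (p + 1)))
        * (((A ^ ((1 : ℝ) / 2)) ^ ((N : ℝ) * (p - 1) / 2))
            * ((B ^ (1 / (p + 1))) ^ (p + 1)))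
          ^ (1 / ((N : ℝ) * (p - 1) / 2 + (p + 1))) := by
    apply mul_nonneg (Real.rpow_nonneg hXpos.le _)
    apply Real.rpow_nonneg
    exact mul_nonneg (Real.rpow_nonneg (Real.rpow_nonneg hAnn _) _)
      (Real.rpow_nonneg (Real.rpow_nonneg hBnn _) _)
  rcases eq_or_lt_of_le hSnn with hS0 | hSpos
  · rw [← hS0, Real.zero_rpow (by norm_num : (1:ℝ)/2 ≠ 0)]
    exact hRHSnn
  -- S > 0 : show A > 0 and B > 0
  haveI : Nonempty (Fin N) := Fin.pos_iff_nonempty.mp hN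
  haveI : Nontrivial (EuclideanSpace ℝ (Fin N)) := by
    apply Nontrivial.mk
    refine ⟨0, EuclideanSpace.single ⟨0, hN⟩ 1, ?_⟩
    intro h
    have := congrArg (fun v => v ⟨0, hN⟩) h.symm
    simp [EuclideanSpace.single] at this
  have hBpos : 0 < B := by
    rcases hBnn.lt_or_eq with h | h
    · exact h
    · exfalso
      have h0 : (fun x : EuclideanSpace ℝ (Fin N) => ‖u x‖ ^ (p+1)) =ᵐ[volume] 0 :=
        (integral_eq_zero_iff_of_nonneg (fun x => by positivity) hu_Lp1).mp
          (hBdef.symm.trans h.symm)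
      have hz : (fun x : EuclideanSpace ℝ (Fin N) => (‖u x‖ ^ 2 : ℝ)) =ᵐ[volume] 0 := by
        filter_upwards [h0] with x hx
        simp only [Pi.zero_apply] at hx ⊢
        have hnu : ‖u x‖ = 0 := by
          by_contra hne
          have hpos : 0 < ‖u x‖ := lt_of_le_of_ne (norm_nonneg _) (Ne.symm hne)
          have h2 := Real.rpow_pos_of_pos hpos (p+1)
          rw [hx] at h2
          exact lt_irrefl 0 h2
        rw [hnu]
        norm_num
      have hS0 : S = 0 := by rw [hSdef, integral_congr_ae hz]; simp
      linarith
  have hApos : 0 < A := by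
    rcases hAnn.lt_or_eq with h | h
    · exact h
    · exfalso
      have h0 : (fun x : EuclideanSpace ℝ (Fin N) => ‖x‖ ^ 2 * ‖u x‖ ^ 2) =ᵐ[volume] 0 :=
        (integral_eq_zero_iff_of_nonneg (fun x => by positivity) hu_var).mp
          (hAdef.symm.trans h.symm)
      have hne : ∀ᵐ x : EuclideanSpace ℝ (Fin N) ∂volume, x ≠ 0 := by
        have hm0 : volume ({(0:EuclideanSpace ℝ (Fin N))} : Set _) = 0 := measure_singleton _
        rw [ae_iff]
        simpa using hm0
      have hz : (fun x : EuclideanSpace ℝ (Fin N) => (‖u x‖ ^ 2 : ℝ)) =ᵐ[volume] 0 := by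
        filter_upwards [h0, hne] with x hx hxne
        simp only [Pi.zero_apply] at hx ⊢
        have hnx : (0:ℝ) < ‖x‖ ^ 2 := by
          have : ‖x‖ ≠ 0 := norm_ne_zero_iff.mpr hxne
          positivity
        rcases mul_eq_zero.mp hx with h' | h'
        · exact absurd h' hnx.ne'
        · exact h'
      have hS0 : S = 0 := by rw [hSdef, integral_congr_ae hz]; simp
      linarith
  -- the optimization
  set K0 : ℝ := (((p+1)/2) - 1) * ((p+1)/2) ^ (-((((p+1)/2))/(((p+1)/2)-1)))
      * (π ^ ((N:ℝ)/2) * Real.Gamma ((((p+1)/2))/(((p+1)/2)-1) + 1)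
        / Real.Gamma ((N:ℝ)/2 + ((((p+1)/2))/(((p+1)/2)-1) + 1))) with hK0def
  have hq2 : (0:ℝ) < (p+1)/2 := by linarith
  have hq21 : (0:ℝ) < (p+1)/2 - 1 := by linarith
  have hrat : (0:ℝ) < ((p+1)/2)/(((p+1)/2)-1) := div_pos hq2 hq21
  have hg1 : (0:ℝ) < Real.Gamma ((((p+1)/2))/(((p+1)/2)-1) + 1) :=
    Real.Gamma_pos_of_pos (by linarith)
  have hg2 : (0:ℝ) < Real.Gamma ((N:ℝ)/2 + ((((p+1)/2))/(((p+1)/2)-1) + 1)) :=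
    Real.Gamma_pos_of_pos (by positivity)
  have hK0 : 0 < K0 := by
    rw [hK0def]
    have hpi := Real.pi_pos
    exact mul_pos (mul_pos hq21 (Real.rpow_pos_of_pos hq2 _))
      (div_pos (mul_pos (Real.rpow_pos_of_pos hpi _) hg1) hg2)
  have ha : (0:ℝ) < 2/(p-1) := by positivity
  have hb : (0:ℝ) < (N:ℝ)/2 := by positivity
  have hm : (0:ℝ) < 1 + 2/(p-1) + (N:ℝ)/2 := by positivity
  set T : ℝ := (K0 * A ^ ((N:ℝ)/2) * B ^ (2/(p-1)) * (2/(p-1)) ^ (-(2/(p-1)))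
      * ((N:ℝ)/2) ^ (-((N:ℝ)/2))) ^ (1/(1 + 2/(p-1) + (N:ℝ)/2)) with hTdef
  have hbase : (0:ℝ) < K0 * A ^ ((N:ℝ)/2) * B ^ (2/(p-1)) * (2/(p-1)) ^ (-(2/(p-1)))
      * ((N:ℝ)/2) ^ (-((N:ℝ)/2)) :=
    mul_pos (mul_pos (mul_pos (mul_pos hK0 (Real.rpow_pos_of_pos hApos _))
      (Real.rpow_pos_of_pos hBpos _)) (Real.rpow_pos_of_pos ha _)) (Real.rpow_pos_of_pos hb _)
  have hT : 0 < T := by rw [hTdef]; exact Real.rpow_pos_of_pos hbase _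
  have hTm : (1 + 2/(p-1) + (N:ℝ)/2) * Real.log T
      = Real.log K0
        + ((N:ℝ)/2)*Real.log A + (2/(p-1))*Real.log B
        - (2/(p-1))*Real.log (2/(p-1)) - ((N:ℝ)/2)*Real.log ((N:ℝ)/2) := by
    rw [hTdef, Real.log_rpow hbase, ← mul_assoc, mul_one_div_cancel hm.ne', one_mul,
      Real.log_mul (by positivity) (Real.rpow_pos_of_pos hb _).ne',
      Real.log_mul (by positivity) (Real.rpow_pos_of_pos ha _).ne',
      Real.log_mul (by positivity) (Real.rpow_pos_of_pos hBpos _).ne',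
      Real.log_mul hK0.ne' (Real.rpow_pos_of_pos hApos _).ne',
      Real.log_rpow hApos, Real.log_rpow hBpos, Real.log_rpow ha, Real.log_rpow hb]
    ring
  have hlam : 0 < ((N:ℝ)/2) * T / A := div_pos (mul_pos hb hT) hApos
  have hmu : 0 < (2/(p-1)) * T / B := div_pos (mul_pos ha hT) hBpos
  have hb1 := key_bound N hN p hp u hu_L2 hu_Lp1 hu_var hlam hmu
  rw [← hAdef, ← hBdef, ← hSdef, ← hK0def] at hb1
  rw [show -(1/(((p+1)/2)-1)) = -(2/(p-1)) by
      rw [show ((p+1)/2 - 1 : ℝ) = (p-1)/2 by ring, one_div_div],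
    show (-(N:ℝ)/2 : ℝ) = -((N:ℝ)/2) by ring] at hb1
  have hopt := opt_abstract hK0 hApos hBpos ha hb hT hTm
  have hST : S ≤ (1 + 2/(p-1) + (N:ℝ)/2) * T := by
    rw [← hopt]; exact hb1
  rw [hK0def] at hTm
  calc S ^ ((1:ℝ)/2) ≤ ((1 + 2/(p-1) + (N:ℝ)/2) * T) ^ ((1:ℝ)/2) :=
        Real.rpow_le_rpow hSnn hST (by norm_num)
    _ = _ := (const_eq N hN p hp hApos hBpos hT hTm).symm
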